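/- Let X, Y, X̂ be finite sets with joint distribution factoring as a Markov chain Y → X → X̂ (i.e. p(y,x,x̂) = p(x) p(y|x) p(x̂|x)), and define the prediction distribution p(ŷ|x) = Σ_{x̂} p(y=ŷ|x̂) p(x̂|x) where p(y|x̂) is the induced conditional. Then the expected dual distortion E_{p(x,x̂)}[ D(p(·|x̂) ‖ p(·|x)) ] (KL divergence from the decoder to the data conditional) equals I(X̂;Ŷ) − I(X;Ŷ) + E_{p(x)}[ D(p(ŷ|x) ‖ p(y|x)) ], where Ŷ is distributed via the decoder through the chain. -/

import Mathlib

open Real Finset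

/-- Dual distortion decomposition: under the Markov chain Y → X → X̂,
the expected dual distortion equals I(X̂;Ŷ) − I(X;Ŷ) plus the expected KL
divergence between the prediction distribution and the data conditional. -/
theorem dual_distortion_decomposition
    {X Y Xh : Type} [Fintype X] [Fintype Y] [Fintype Xh]
    (px : X → ℝ) (pyx : Y → X → ℝ) (pex : Xh → X → ℝ)
    (hpx : ∀ x, 0 < px x) (hpx1 : ∑ x, px x = 1)
    (hpyx : ∀ y x, 0 < pyx y x) (hpyx1 : ∀ x, ∑ y, pyx y x = 1)
    (hpex : ∀ xh x, 0 ≤ pex xh x) (hpex1 : ∀ x, ∑ xh, pex xh x = 1)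
    -- marginal on X̂
    (μ : Xh → ℝ) (hμ : ∀ xh, μ xh = ∑ x, px x * pex xh x)
    (hμpos : ∀ xh, 0 < μ xh)
    -- Bayes optimal decoder p(y | x̂)
    (dec : Y → Xh → ℝ)
    (hdec : ∀ y xh, dec y xh = (∑ x, px x * pyx y x * pex xh x) / μ xh)
    -- prediction distribution p(ŷ | x)
    (pred : Y → X → ℝ)
    (hpred : ∀ y x, pred y x = ∑ xh, dec y xh * pex xh x)
    -- marginal of Ŷ
    (qy : Y → ℝ) (hqy : ∀ y, qy y = ∑ xh, μ xh * dec y xh) :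
    -- expected dual distortion
    (∑ x, ∑ xh, px x * pex xh x * (∑ y, dec y xh * Real.log (dec y xh / pyx y x)))
      =
    -- I(X̂;Ŷ)
    (∑ xh, ∑ y, μ xh * dec y xh * Real.log (dec y xh / qy y))
    -- − I(X;Ŷ)
    - (∑ x, ∑ y, px x * pred y x * Real.log (pred y x / qy y))
    -- + E_{p(x)}[ D(p(ŷ|x) ‖ p(y|x)) ]
    + (∑ x, px x * (∑ y, pred y x * Real.log (pred y x / pyx y x))) := by
  -- positivity facts
  have hXh : Nonempty Xh := by
    by_contra h
    rw [not_nonempty_iff] at h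
    have hX : Nonempty X := by
      by_contra h2
      rw [not_nonempty_iff] at h2
      simp at hpx1
    have := hpex1 (Classical.arbitrary X)
    simp at this
  have hdecpos : ∀ y xh, 0 < dec y xh := by
    intro y xh
    rw [hdec]
    refine div_pos ?_ (hμpos xh)
    have h := hμpos xh
    rw [hμ] at h
    obtain ⟨x, hx⟩ : ∃ x, 0 < px x * pex xh x := by
      by_contra hc
      push_neg at hc
      have : ∑ x, px x * pex xh x ≤ 0 := Finset.sum_nonpos (fun x _ => hc x)
      linarith
    have hb : 0 < pex xh x := by nlinarith [hpx x, hpex xh x]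
    refine Finset.sum_pos' (fun i _ => mul_nonneg (mul_nonneg (hpx i).le (hpyx y i).le) (hpex xh i)) ⟨x, Finset.mem_univ x, ?_⟩
    exact mul_pos (mul_pos (hpx x) (hpyx y x)) hb
  have hpredpos : ∀ y x, 0 < pred y x := by
    intro y x
    rw [hpred]
    obtain ⟨xh, hxh⟩ : ∃ xh, 0 < pex xh x := by
      by_contra hc
      push_neg at hc
      have : ∑ xh, pex xh x ≤ 0 := Finset.sum_nonpos (fun i _ => hc i)
      rw [hpex1 x] at this; linarith
    exact Finset.sum_pos' (fun i _ => mul_nonneg (hdecpos y i).le (hpex i x))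
      ⟨xh, Finset.mem_univ xh, mul_pos (hdecpos y xh) hxh⟩
  have hqypos : ∀ y, 0 < qy y := by
    intro y
    rw [hqy]
    exact Finset.sum_pos (fun i _ => mul_pos (hμpos i) (hdecpos y i)) Finset.univ_nonempty
  -- marginalization lemmas
  have key1 : ∀ y, ∑ x, px x * pred y x = qy y := by
    intro y
    calc ∑ x, px x * pred y x = ∑ x, ∑ xh, px x * (dec y xh * pex xh x) := by
          simp [hpred, Finset.mul_sum]
      _ = ∑ xh, ∑ x, px x * (dec y xh * pex xh x) := Finset.sum_comm
      _ = ∑ xh, μ xh * dec y xh := by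
          refine Finset.sum_congr rfl fun xh _ => ?_
          rw [hμ, Finset.sum_mul]
          exact Finset.sum_congr rfl fun x _ => by ring
      _ = qy y := (hqy y).symm
  have marg : ∀ g : Y → Xh → ℝ,
      ∑ x, ∑ xh, px x * pex xh x * (∑ y, g y xh) = ∑ xh, μ xh * (∑ y, g y xh) := by
    intro g
    rw [Finset.sum_comm]
    refine Finset.sum_congr rfl fun xh _ => ?_
    rw [← Finset.sum_mul, ← hμ]
  have key3 : ∀ x, ∑ xh, pex xh x * (∑ y, dec y xh * Real.log (pyx y x)) =
      ∑ y, pred y x * Real.log (pyx y x) := by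
    intro x
    calc ∑ xh, pex xh x * (∑ y, dec y xh * Real.log (pyx y x))
        = ∑ xh, ∑ y, pex xh x * (dec y xh * Real.log (pyx y x)) := by
          simp [Finset.mul_sum]
      _ = ∑ y, ∑ xh, pex xh x * (dec y xh * Real.log (pyx y x)) := Finset.sum_comm
      _ = ∑ y, pred y x * Real.log (pyx y x) := by
          refine Finset.sum_congr rfl fun y _ => ?_
          rw [hpred, Finset.sum_mul]
          exact Finset.sum_congr rfl fun xh _ => by ring
  -- abbreviations
  set Sdd := ∑ xh, ∑ y, μ xh * dec y xh * Real.log (dec y xh) with hSdd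
  set Sqq := ∑ y, qy y * Real.log (qy y) with hSqq
  set Spp := ∑ x, ∑ y, px x * pred y x * Real.log (pred y x) with hSpp
  set Spyx := ∑ x, ∑ y, px x * pred y x * Real.log (pyx y x) with hSpyx
  have hL : (∑ x, ∑ xh, px x * pex xh x * (∑ y, dec y xh * Real.log (dec y xh / pyx y x)))
      = Sdd - Spyx := by
    have e1 : ∀ x, ∑ xh, px x * pex xh x * (∑ y, dec y xh * Real.log (dec y xh / pyx y x))
        = (∑ xh, px x * pex xh x * (∑ y, dec y xh * Real.log (dec y xh)))
          - px x * ∑ y, pred y x * Real.log (pyx y x) := by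
      intro x
      rw [← key3 x, Finset.mul_sum, ← Finset.sum_sub_distrib]
      refine Finset.sum_congr rfl fun xh _ => ?_
      have : ∑ y, dec y xh * Real.log (dec y xh / pyx y x)
          = (∑ y, dec y xh * Real.log (dec y xh)) - (∑ y, dec y xh * Real.log (pyx y x)) := by
        rw [← Finset.sum_sub_distrib]
        refine Finset.sum_congr rfl fun y _ => ?_
        rw [Real.log_div (hdecpos y xh).ne' (hpyx y x).ne']
        ring
      rw [this]; ring
    rw [Finset.sum_congr rfl (fun x _ => e1 x), Finset.sum_sub_distrib]
    congr 1
    · rw [marg (fun y xh => dec y xh * Real.log (dec y xh)), hSdd]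
      refine Finset.sum_congr rfl fun xh _ => ?_
      rw [Finset.mul_sum]
      exact Finset.sum_congr rfl fun y _ => by ring
    · rw [hSpyx]
      refine Finset.sum_congr rfl fun x _ => ?_
      rw [Finset.mul_sum]
      exact Finset.sum_congr rfl fun y _ => by ring
  have hA : (∑ xh, ∑ y, μ xh * dec y xh * Real.log (dec y xh / qy y)) = Sdd - Sqq := by
    have e : ∀ xh y, μ xh * dec y xh * Real.log (dec y xh / qy y)
        = μ xh * dec y xh * Real.log (dec y xh) - μ xh * dec y xh * Real.log (qy y) := by
      intro xh y
      rw [Real.log_div (hdecpos y xh).ne' (hqypos y).ne']; ring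
    simp only [e, Finset.sum_sub_distrib]
    congr 1
    rw [hSqq, Finset.sum_comm]
    refine Finset.sum_congr rfl fun y _ => ?_
    rw [← Finset.sum_mul, ← hqy]
  have hB : (∑ x, ∑ y, px x * pred y x * Real.log (pred y x / qy y)) = Spp - Sqq := by
    have e : ∀ x y, px x * pred y x * Real.log (pred y x / qy y)
        = px x * pred y x * Real.log (pred y x) - px x * pred y x * Real.log (qy y) := by
      intro x y
      rw [Real.log_div (hpredpos y x).ne' (hqypos y).ne']; ring
    simp only [e, Finset.sum_sub_distrib]
    congr 1
    rw [hSqq, Finset.sum_comm]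
    refine Finset.sum_congr rfl fun y _ => ?_
    rw [← Finset.sum_mul, key1]
  have hC : (∑ x, px x * (∑ y, pred y x * Real.log (pred y x / pyx y x))) = Spp - Spyx := by
    have e : ∀ x, px x * (∑ y, pred y x * Real.log (pred y x / pyx y x))
        = (∑ y, px x * pred y x * Real.log (pred y x))
          - (∑ y, px x * pred y x * Real.log (pyx y x)) := by
      intro x
      rw [Finset.mul_sum, ← Finset.sum_sub_distrib]
      refine Finset.sum_congr rfl fun y _ => ?_
      rw [Real.log_div (hpredpos y x).ne' (hpyx y x).ne']; ring
    simp only [e, Finset.sum_sub_distrib]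
    rw [hSpp, hSpyx]
  rw [hL, hA, hB, hC]
  ring
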